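/- Every C-pattern corresponding to a rank-3 real cluster-cyclic exchange matrix is sign-coherent: for every reduced sequence w and each i ∈ {1,2,3}, the i-th column c_i^w of the C-matrix C^w satisfies c_i^w ≥ 0 or c_i^w ≤ 0 componentwise. -/

import Mathlib

open Matrix

noncomputable section

abbrev Mat3 := Matrix (Fin 3) (Fin 3) ℝ

def pPart {n : ℕ} (A : Matrix (Fin n) (Fin n) ℝ) : Matrix (Fin n) (Fin n) ℝ :=
  Matrix.of fun i j => max (A i j) 0

def Jmat {n : ℕ} (k : Fin n) : Matrix (Fin n) (Fin n) ℝ :=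
  Matrix.diagonal fun i => if i = k then -1 else 1

/-- `A^{•k}`: keep only column `k`. -/
def colSel {n : ℕ} (k : Fin n) (A : Matrix (Fin n) (Fin n) ℝ) : Matrix (Fin n) (Fin n) ℝ :=
  Matrix.of fun i j => if j = k then A i j else 0

/-- `A^{k•}`: keep only row `k`. -/
def rowSel {n : ℕ} (k : Fin n) (A : Matrix (Fin n) (Fin n) ℝ) : Matrix (Fin n) (Fin n) ℝ :=
  Matrix.of fun i j => if i = k then A i j else 0

/-- Matrix mutation in direction `k`. -/
def mutB {n : ℕ} (k : Fin n) (B : Matrix (Fin n) (Fin n) ℝ) : Matrix (Fin n) (Fin n) ℝ :=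
  (Jmat k + colSel k (pPart (-B))) * B * (Jmat k + rowSel k (pPart B))

/-- One step of the simultaneous `(B, C, G)` recursion, mutating at direction `k`. -/
def CGstep {n : ℕ} (B0 : Matrix (Fin n) (Fin n) ℝ)
    (p : Matrix (Fin n) (Fin n) ℝ × Matrix (Fin n) (Fin n) ℝ × Matrix (Fin n) (Fin n) ℝ)
    (k : Fin n) :
    Matrix (Fin n) (Fin n) ℝ × Matrix (Fin n) (Fin n) ℝ × Matrix (Fin n) (Fin n) ℝ :=
  (mutB k p.1,
   p.2.1 * Jmat k + p.2.1 * rowSel k (pPart p.1) + colSel k (pPart (-p.2.1)) * p.1,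
   p.2.2 * Jmat k + p.2.2 * colSel k (pPart (-p.1)) - B0 * colSel k (pPart (-p.2.1)))

def CGmat {n : ℕ} (B : Matrix (Fin n) (Fin n) ℝ) (w : List (Fin n)) :
    Matrix (Fin n) (Fin n) ℝ × Matrix (Fin n) (Fin n) ℝ × Matrix (Fin n) (Fin n) ℝ :=
  w.foldl (CGstep B) (B, 1, 1)

/-- The exchange matrix `B^w`. -/
def Bmat {n : ℕ} (B : Matrix (Fin n) (Fin n) ℝ) (w : List (Fin n)) : Matrix (Fin n) (Fin n) ℝ :=
  (CGmat B w).1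

/-- The `C`-matrix `C^w`. -/
def Cmat {n : ℕ} (B : Matrix (Fin n) (Fin n) ℝ) (w : List (Fin n)) : Matrix (Fin n) (Fin n) ℝ :=
  (CGmat B w).2.1

/-- The `G`-matrix `G^w`. -/
def Gmat {n : ℕ} (B : Matrix (Fin n) (Fin n) ℝ) (w : List (Fin n)) : Matrix (Fin n) (Fin n) ℝ :=
  (CGmat B w).2.2

/-- A sequence is reduced if consecutive entries differ. -/
def ReducedSeq {n : ℕ} (w : List (Fin n)) : Prop := w.Chain' (· ≠ ·)

def SkewSymmetrizable {n : ℕ} (B : Matrix (Fin n) (Fin n) ℝ) : Prop :=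
  ∃ d : Fin n → ℝ, (∀ i, 0 < d i) ∧ (Matrix.diagonal d * B)ᵀ = -(Matrix.diagonal d * B)

def cyclicPattern : Mat3 := !![0,-1,1; 1,0,-1; -1,1,0]

/-- A rank-3 exchange matrix is cyclic if its sign pattern is `± cyclicPattern`. -/
def IsCyclic3 (B : Mat3) : Prop :=
  (∀ i j, Real.sign (B i j) = cyclicPattern i j) ∨
  (∀ i j, Real.sign (B i j) = - cyclicPattern i j)

/-- `B` is cluster-cyclic if every iterated mutation along a reduced sequence is cyclic. -/
def ClusterCyclic (B : Mat3) : Prop :=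
  ∀ w : List (Fin 3), ReducedSeq w → IsCyclic3 (Bmat B w)

/-- `ε` is a family of tropical signs for the (sign-coherent) `C`-pattern of `B`. -/
def IsTropSigns (B : Mat3) (ε : List (Fin 3) → Fin 3 → ℝ) : Prop :=
  ∀ w : List (Fin 3), ReducedSeq w → ∀ i : Fin 3,
    (ε w i = 1 ∨ ε w i = -1) ∧ ∀ j, 0 ≤ ε w i * Cmat B w j i

namespace SC

open Matrix

lemma pos_of_sign_one {x : ℝ} (h : Real.sign x = 1) : 0 < x := by
  rcases lt_trichotomy x 0 with h1|h1|h1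
  · rw [Real.sign_of_neg h1] at h; norm_num at h
  · rw [h1, Real.sign_zero] at h; norm_num at h
  · exact h1

lemma neg_of_sign_neg_one {x : ℝ} (h : Real.sign x = -1) : x < 0 := by
  rcases lt_trichotomy x 0 with h1|h1|h1
  · exact h1
  · rw [h1, Real.sign_zero] at h; norm_num at h
  · rw [Real.sign_of_pos h1] at h; norm_num at h

lemma mem3 {k j l : Fin 3} (hkj : k ≠ j) (hkl : k ≠ l) (hjl : j ≠ l) (x : Fin 3) :
    x = k ∨ x = j ∨ x = l := by
  revert hkj hkl hjl
  fin_cases k <;> fin_cases j <;> fin_cases l <;> fin_cases x <;> decide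

lemma third (k j : Fin 3) (hkj : k ≠ j) : ∃ l, k ≠ l ∧ j ≠ l := by
  revert hkj
  fin_cases k <;> fin_cases j <;> decide

lemma cycPat_diag (x : Fin 3) : cyclicPattern x x = 0 := by
  fin_cases x <;> norm_num [cyclicPattern]

lemma cycPat_vals {k j l : Fin 3} (hkj : k ≠ j) (hkl : k ≠ l) (hjl : j ≠ l) :
    (cyclicPattern k j = 1 ∧ cyclicPattern j k = -1 ∧ cyclicPattern k l = -1 ∧
     cyclicPattern l k = 1 ∧ cyclicPattern j l = 1 ∧ cyclicPattern l j = -1) ∨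
    (cyclicPattern k j = -1 ∧ cyclicPattern j k = 1 ∧ cyclicPattern k l = 1 ∧
     cyclicPattern l k = -1 ∧ cyclicPattern j l = -1 ∧ cyclicPattern l j = 1) := by
  revert hkj hkl hjl
  fin_cases k <;> fin_cases j <;> fin_cases l <;> simp <;> norm_num [cyclicPattern] <;> exact ⟨rfl, rfl, rfl, rfl⟩

lemma diag_zero {M : Mat3} (h : IsCyclic3 M) (x : Fin 3) : M x x = 0 := by
  rcases h with h|h
  · have := h x x; rw [cycPat_diag] at this; exact Real.sign_eq_zero_iff.1 this
  · have := h x x; rw [cycPat_diag, neg_zero] at this; exact Real.sign_eq_zero_iff.1 this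

/-- From cyclicity and one positive entry, all six sign facts. -/
lemma cyc_of_pos {M : Mat3} {k j l : Fin 3} (hkj : k ≠ j) (hkl : k ≠ l) (hjl : j ≠ l)
    (h : IsCyclic3 M) (hpos : 0 < M k j) :
    M j k < 0 ∧ M k l < 0 ∧ 0 < M l k ∧ 0 < M j l ∧ M l j < 0 := by
  rcases cycPat_vals hkj hkl hjl with ⟨p1,p2,p3,p4,p5,p6⟩|⟨p1,p2,p3,p4,p5,p6⟩ <;>
  rcases h with h|h
  · exact ⟨neg_of_sign_neg_one ((h j k).trans p2),
      neg_of_sign_neg_one ((h k l).trans p3),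
      pos_of_sign_one ((h l k).trans p4),
      pos_of_sign_one ((h j l).trans p5),
      neg_of_sign_neg_one ((h l j).trans p6)⟩
  · exfalso
    have := (h k j).trans (by rw [p1] : -cyclicPattern k j = -1)
    have := neg_of_sign_neg_one this
    linarith
  · exfalso
    have := (h k j).trans p1
    have := neg_of_sign_neg_one this
    linarith
  · refine ⟨neg_of_sign_neg_one ((h j k).trans (by rw [p2]; try norm_num)),
      neg_of_sign_neg_one ((h k l).trans (by rw [p3]; try norm_num)),
      pos_of_sign_one ((h l k).trans (by rw [p4]; try norm_num)),
      pos_of_sign_one ((h j l).trans (by rw [p5]; try norm_num)),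
      neg_of_sign_neg_one ((h l j).trans (by rw [p6]; try norm_num))⟩

lemma row_prod_neg {M : Mat3} {k a b : Fin 3} (hka : k ≠ a) (hkb : k ≠ b) (hab : a ≠ b)
    (h : IsCyclic3 M) : M k a * M k b < 0 := by
  have h0 : M k a ≠ 0 := by
    intro h0
    rcases cycPat_vals hka hkb hab with ⟨p1,_⟩|⟨p1,_⟩ <;> rcases h with hh|hh <;>
    all_goals (have hx := hh k a; rw [h0, Real.sign_zero, p1] at hx; norm_num at hx)
  rcases lt_or_gt_of_ne h0 with hn|hp
  · -- M k a < 0, so M k b > 0 : use cyc_of_pos with roles (k, b, a)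
    have hpos : 0 < M k b := by
      rcases cycPat_vals hka hkb hab with ⟨p1,p2,p3,_⟩|⟨p1,p2,p3,_⟩ <;> rcases h with hh|hh
      · exfalso; have := pos_of_sign_one ((hh k a).trans p1); linarith
      · exact pos_of_sign_one ((hh k b).trans (by rw [p3]; norm_num))
      · exact pos_of_sign_one ((hh k b).trans p3)
      · exfalso; have := pos_of_sign_one ((hh k a).trans (by rw [p1]; norm_num)); linarith
    nlinarith
  · have := (cyc_of_pos hka hkb hab h hp).2.1
    nlinarith

/-- e-scaled cyclicity facts: given `0 < e * M a b` with `e = ±1`. -/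
lemma escaled_cyc {M : Mat3} {a b c : Fin 3} {e : ℝ} (hab : a ≠ b) (hac : a ≠ c) (hbc : b ≠ c)
    (h : IsCyclic3 M) (he : e = 1 ∨ e = -1) (hpos : 0 < e * M a b) :
    e * M b a < 0 ∧ e * M a c < 0 ∧ 0 < e * M c a ∧ 0 < e * M b c ∧ e * M c b < 0 := by
  rcases he with he|he
  · subst he
    rw [one_mul] at hpos
    obtain ⟨h1,h2,h3,h4,h5⟩ := cyc_of_pos hab hac hbc h hpos
    constructor; · linarith [h1]
    constructor; · linarith [h2]
    constructor; · linarith [h3]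
    constructor; · linarith [h4]
    · linarith [h5]
  · subst he
    have hpos' : M a b < 0 := by nlinarith
    have hcb : 0 < M a c := by
      have := row_prod_neg hab hac hbc h
      nlinarith
    obtain ⟨h1,h2,h3,h4,h5⟩ := cyc_of_pos hac hab (Ne.symm hbc) h hcb
    -- h1 : M c a < 0, h2 : M a b < 0, h3 : 0 < M b a, h4 : 0 < M c b, h5 : M b c < 0
    constructor; · nlinarith
    constructor; · nlinarith
    constructor; · nlinarith
    constructor; · nlinarith
    · nlinarith

end SC
namespace SC

lemma CGmat_concat (B : Mat3) (w : List (Fin 3)) (k : Fin 3) :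
    CGmat B (w ++ [k]) = CGstep B (CGmat B w) k := by
  unfold CGmat
  rw [List.foldl_append]
  rfl

lemma Bmat_concat (B : Mat3) (w : List (Fin 3)) (k : Fin 3) :
    Bmat B (w ++ [k]) = mutB k (Bmat B w) := by
  unfold Bmat
  rw [CGmat_concat]
  rfl

lemma Cmat_concat (B : Mat3) (w : List (Fin 3)) (k : Fin 3) :
    Cmat B (w ++ [k]) = Cmat B w * Jmat k + Cmat B w * rowSel k (pPart (Bmat B w))
      + colSel k (pPart (-(Cmat B w))) * Bmat B w := by
  unfold Cmat Bmat
  rw [CGmat_concat]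
  rfl

lemma Bmat_nil (B : Mat3) : Bmat B [] = B := rfl
lemma Cmat_nil (B : Mat3) : Cmat B [] = 1 := rfl

/-- entry formula for the C recursion. -/
lemma Cmat_concat_apply (B : Mat3) (w : List (Fin 3)) (k : Fin 3) (r x : Fin 3) :
    Cmat B (w ++ [k]) r x = Cmat B w r x * (if x = k then -1 else 1)
      + Cmat B w r k * max (Bmat B w k x) 0 + max (-(Cmat B w r k)) 0 * Bmat B w k x := by
  rw [Cmat_concat]
  have h1 : (Cmat B w * Jmat k) r x = Cmat B w r x * (if x = k then -1 else 1) := by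
    rw [Jmat, Matrix.mul_diagonal]
  have h2 : (Cmat B w * rowSel k (pPart (Bmat B w))) r x = Cmat B w r k * max (Bmat B w k x) 0 := by
    rw [Matrix.mul_apply]
    rw [Finset.sum_eq_single k]
    · simp [rowSel, pPart]
    · intro b _ hb
      simp [rowSel, hb]
    · simp
  have h3 : (colSel k (pPart (-(Cmat B w))) * Bmat B w) r x
      = max (-(Cmat B w r k)) 0 * Bmat B w k x := by
    rw [Matrix.mul_apply]
    rw [Finset.sum_eq_single k]
    · simp [colSel, pPart]
    · intro b _ hb
      simp [colSel, hb]
    · simp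
  simp [Matrix.add_apply, h1, h2, h3]

/-- entry formula for mutB. -/
lemma mutB_apply {B : Mat3} {k : Fin 3} (hd : B k k = 0) (x y : Fin 3) :
    mutB k B x y = ((if x = k then -1 else 1) * B x y + max (-(B x k)) 0 * B k y)
        * (if y = k then -1 else 1)
      + (if x = k then -1 else 1) * B x k * max (B k y) 0 := by
  unfold mutB
  have hEB : ∀ z, ((Jmat k + colSel k (pPart (-B))) * B) x z
      = (if x = k then -1 else 1) * B x z + max (-(B x k)) 0 * B k z := by
    intro z
    rw [Matrix.add_mul, Matrix.add_apply]
    have e1 : (Jmat k * B) x z = (if x = k then -1 else 1) * B x z := by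
      rw [Jmat, Matrix.diagonal_mul]
    have e2 : (colSel k (pPart (-B)) * B) x z = max (-(B x k)) 0 * B k z := by
      rw [Matrix.mul_apply, Finset.sum_eq_single k]
      · simp [colSel, pPart]
      · intro b _ hb; simp [colSel, hb]
      · simp
    rw [e1, e2]
  rw [Matrix.mul_apply]
  rw [Finset.sum_congr rfl (fun z _ => by rw [hEB z])]
  have hsum : ∀ z, ((if x = k then -1 else 1) * B x z + max (-(B x k)) 0 * B k z)
      * (Jmat k + rowSel k (pPart B)) z y
      = ((if x = k then (-1:ℝ) else 1) * B x z + max (-(B x k)) 0 * B k z)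
        * ((if z = y then (if z = k then (-1:ℝ) else 1) else 0) + (if z = k then max (B k y) 0 else 0)) := by
    intro z
    congr 1
    rw [Matrix.add_apply, Jmat, Matrix.diagonal_apply, rowSel]
    by_cases hz : z = k
    · subst hz; simp [pPart]
    · simp [pPart, hz]
  rw [Finset.sum_congr rfl (fun z _ => by rw [hsum z])]
  have expand : ∀ z, ((if x = k then (-1:ℝ) else 1) * B x z + max (-(B x k)) 0 * B k z)
        * ((if z = y then (if z = k then (-1:ℝ) else 1) else 0) + (if z = k then max (B k y) 0 else 0))
      = (if z = y then ((if x = k then (-1:ℝ) else 1) * B x y + max (-(B x k)) 0 * B k y) * (if y = k then -1 else 1) else 0)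
      + (if z = k then ((if x = k then (-1:ℝ) else 1) * B x k + max (-(B x k)) 0 * B k k) * max (B k y) 0 else 0) := by
    intro z
    by_cases hzy : z = y <;> by_cases hzk : z = k <;> subst_eqs <;> simp_all <;> ring
  rw [Finset.sum_congr rfl (fun z _ => by rw [expand z])]
  rw [Finset.sum_add_distrib, Finset.sum_ite_eq' Finset.univ y, Finset.sum_ite_eq' Finset.univ k]
  simp [hd]

lemma mutB_row_k {B : Mat3} {k y : Fin 3} (hd : B k k = 0) (hy : y ≠ k) :
    mutB k B k y = -(B k y) := by
  rw [mutB_apply hd]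
  simp [hy, hd]

lemma mutB_col_k {B : Mat3} {k x : Fin 3} (hd : B k k = 0) (hx : x ≠ k) :
    mutB k B x k = -(B x k) := by
  rw [mutB_apply hd]
  simp [hx, hd]
  try ring

lemma mutB_other {B : Mat3} {k x y : Fin 3} (hd : B k k = 0) (hx : x ≠ k) (hy : y ≠ k) :
    mutB k B x y = B x y + max (-(B x k)) 0 * B k y + B x k * max (B k y) 0 := by
  rw [mutB_apply hd]
  simp [hx, hy]
  try ring

/-- reduced sequence concat. -/
lemma reduced_concat {w : List (Fin 3)} {k : Fin 3} :
    ReducedSeq (w ++ [k]) ↔ ReducedSeq w ∧ w.getLast? ≠ some k := by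
  unfold ReducedSeq List.Chain'
  rw [List.isChain_append]
  constructor
  · rintro ⟨h1, _, h3⟩
    refine ⟨h1, fun hc => ?_⟩
    exact (h3 k hc k rfl) rfl
  · rintro ⟨h1, h2⟩
    refine ⟨h1, List.isChain_singleton k, ?_⟩
    intro x hx y hy
    simp at hy
    subst hy
    intro hxy
    subst hxy
    exact h2 hx

end SC
namespace SC

def altW (k j : Fin 3) : ℕ → List (Fin 3)
  | 0 => []
  | n+1 => altW k j n ++ [if n % 2 = 0 then k else j]

def quad (u ut : ℝ) (init : ℝ × ℝ × ℝ × ℝ) : ℕ → ℝ × ℝ × ℝ × ℝ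
  | 0 => init
  | n+1 =>
    let p := quad u ut init n
    (u * (ut * p.1 - p.2.2.1) - p.1, ut * (u * p.2.1 - p.2.2.2) - p.2.1,
     ut * p.1 - p.2.2.1, u * p.2.1 - p.2.2.2)

lemma altW_reduced {w : List (Fin 3)} {k j : Fin 3} (hkj : k ≠ j) (hw : ReducedSeq w)
    (hlast : w.getLast? ≠ some k) (n : ℕ) :
    ReducedSeq (w ++ altW k j n) ∧
      (w ++ altW k j n).getLast? ≠ some (if n % 2 = 0 then k else j) := by
  induction n with
  | zero => simpa [altW] using ⟨hw, hlast⟩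
  | succ m ih =>
    obtain ⟨ih1, ih2⟩ := ih
    have happ : w ++ altW k j (m+1) = (w ++ altW k j m) ++ [if m % 2 = 0 then k else j] := by
      show w ++ (altW k j m ++ _) = _
      rw [List.append_assoc]
    constructor
    · rw [happ, reduced_concat]; exact ⟨ih1, ih2⟩
    · rw [happ, List.getLast?_concat]
      rcases Nat.mod_two_eq_zero_or_one m with h|h
      · have h2' : ¬((m+1) % 2 = 0) := by omega
        simp [h, h2', hkj]
      · have h1' : ¬(m % 2 = 0) := by omega
        have h2 : (m+1) % 2 = 0 := by omega
        simp [h1', h2, Ne.symm hkj]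

lemma no_pos_seq {a : ℝ} (ha : a < 2) (y : ℕ → ℝ) (hy : ∀ n, 0 < y n)
    (hrec : ∀ n, y (n+2) = a * y (n+1) - y n) : False := by
  set z : ℕ → ℝ := fun n => y (n+1) / y n with hz
  have hzpos : ∀ n, 0 < z n := fun n => div_pos (hy (n+1)) (hy n)
  have hstep : ∀ n, z (n+1) ≤ z n - (2 - a) := by
    intro n
    have hy1 := hy (n+1)
    have hy0 := hy n
    have h1 : z (n+1) = a - y n / y (n+1) := by
      show y (n+2) / y (n+1) = a - y n / y (n+1)
      rw [hrec n]
      field_simp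
    have h2 : y (n+1) / y n + y n / y (n+1) ≥ 2 := by
      rw [div_add_div _ _ (ne_of_gt hy0) (ne_of_gt hy1), ge_iff_le,
        le_div_iff₀ (by positivity)]
      nlinarith [sq_nonneg (y (n+1) - y n)]
    have h3 : z n = y (n+1) / y n := rfl
    rw [h1, h3]
    linarith
  have hlin : ∀ n : ℕ, z n ≤ z 0 - n * (2 - a) := by
    intro n
    induction n with
    | zero => simp
    | succ m ih =>
      have := hstep m
      push_cast
      push_cast at ih
      linarith
  obtain ⟨n, hn⟩ := exists_nat_gt (z 0 / (2 - a))
  have h2a : (0:ℝ) < 2 - a := by linarith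
  have h4 : z 0 < n * (2 - a) := by
    rw [div_lt_iff₀ h2a] at hn
    linarith
  have := hlin n
  have := hzpos n
  linarith

lemma descent_core {B0 : Mat3} (hB : ClusterCyclic B0) {w : List (Fin 3)} (hw : ReducedSeq w)
    {k j l : Fin 3} (hkj : k ≠ j) (hkl : k ≠ l) (hjl : j ≠ l)
    (hlast : w.getLast? ≠ some k)
    (hpos : 0 < Bmat B0 w k j) :
    Bmat B0 w k j * Bmat B0 w j k ≤ -4 := by
  by_contra hcon
  push_neg at hcon
  obtain ⟨h1,h2,h3,h4,h5⟩ := cyc_of_pos hkj hkl hjl (hB w hw) hpos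
  set M := Bmat B0 w with hM
  set u := M k j with hu'
  set ut := -(M j k) with hut'
  have hu : 0 < u := hpos
  have hut : 0 < ut := by rw [hut']; linarith
  have hP : u * ut < 4 := by nlinarith
  set q : ℕ → ℝ × ℝ × ℝ × ℝ := quad u ut (-(M k l), M l k, M j l, -(M l j)) with hq
  have qstep : ∀ n, q (n+1) = (u * (ut * (q n).1 - (q n).2.2.1) - (q n).1,
      ut * (u * (q n).2.1 - (q n).2.2.2) - (q n).2.1,
      ut * (q n).1 - (q n).2.2.1, u * (q n).2.1 - (q n).2.2.2) := by
    intro n; rw [hq]; rfl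
  have q1 : ∀ n, (q (n+1)).1 = u * (ut * (q n).1 - (q n).2.2.1) - (q n).1 := by
    intro n; rw [qstep n]
  have q2 : ∀ n, (q (n+1)).2.1 = ut * (u * (q n).2.1 - (q n).2.2.2) - (q n).2.1 := by
    intro n; rw [qstep n]
  have q3 : ∀ n, (q (n+1)).2.2.1 = ut * (q n).1 - (q n).2.2.1 := by
    intro n; rw [qstep n]
  have q4 : ∀ n, (q (n+1)).2.2.2 = u * (q n).2.1 - (q n).2.2.2 := by
    intro n; rw [qstep n]
  have q0 : q 0 = (-(M k l), M l k, M j l, -(M l j)) := by rw [hq]; rfl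
  have hred := altW_reduced hkj hw hlast
  have halt_even : ∀ m : ℕ, altW k j (2*m+1) = altW k j (2*m) ++ [k] := by
    intro m
    show altW k j (2*m) ++ [if (2*m) % 2 = 0 then k else j] = _
    have h0 : (2*m) % 2 = 0 := by omega
    simp [h0]
  have halt_odd : ∀ m : ℕ, altW k j (2*m+2) = altW k j (2*m+1) ++ [j] := by
    intro m
    show altW k j (2*m+1) ++ [if (2*m+1) % 2 = 0 then k else j] = _
    have h0 : ¬((2*m+1) % 2 = 0) := by omega
    simp [h0]
  have shape : ∀ n, Bmat B0 (w ++ altW k j (2*n)) k j = u ∧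
      Bmat B0 (w ++ altW k j (2*n)) j k = -ut ∧
      Bmat B0 (w ++ altW k j (2*n)) k l = -((q n).1) ∧
      Bmat B0 (w ++ altW k j (2*n)) l k = (q n).2.1 ∧
      Bmat B0 (w ++ altW k j (2*n)) j l = (q n).2.2.1 ∧
      Bmat B0 (w ++ altW k j (2*n)) l j = -((q n).2.2.2) := by
    intro n
    induction n with
    | zero =>
      have hnil : w ++ altW k j (2*0) = w := by
        show w ++ altW k j 0 = w
        simp [altW]
      rw [hnil, q0, ← hM]
      exact ⟨rfl, by rw [hut']; ring, by ring, rfl, rfl, by ring⟩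
    | succ m ih =>
      obtain ⟨e1,e2,e3,e4,e5,e6⟩ := ih
      set N := Bmat B0 (w ++ altW k j (2*m)) with hN
      have hredm := (hred (2*m)).1
      have cycm := hB _ hredm
      have hNpos : 0 < N k j := by rw [e1]; exact hu
      obtain ⟨c1,c2,c3,c4,c5⟩ := cyc_of_pos hkj hkl hjl cycm hNpos
      rw [← hN] at c1 c2 c3 c4 c5
      have hv : 0 < (q m).1 := by rw [e3] at c2; linarith
      have hvt : 0 < (q m).2.1 := by rw [e4] at c3; linarith
      have hw1 : 0 < (q m).2.2.1 := by rw [e5] at c4; linarith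
      have hwt : 0 < (q m).2.2.2 := by rw [e6] at c5; linarith
      have hdk : N k k = 0 := diag_zero cycm k
      have hw21 : w ++ altW k j (2*m+1) = (w ++ altW k j (2*m)) ++ [k] := by
        rw [halt_even m, ← List.append_assoc]
      set N1 := Bmat B0 (w ++ altW k j (2*m+1)) with hN1
      have hN1eq : N1 = mutB k N := by rw [hN1, hw21, Bmat_concat, hN]
      have f1 : N1 k j = -u := by rw [hN1eq, mutB_row_k hdk (Ne.symm hkj), e1]
      have f2 : N1 j k = ut := by rw [hN1eq, mutB_col_k hdk (Ne.symm hkj), e2]; ring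
      have f3 : N1 k l = (q m).1 := by rw [hN1eq, mutB_row_k hdk (Ne.symm hkl), e3]; ring
      have f4 : N1 l k = -((q m).2.1) := by rw [hN1eq, mutB_col_k hdk (Ne.symm hkl), e4]
      have f5 : N1 j l = -((q (m+1)).2.2.1) := by
        rw [q3 m, hN1eq, mutB_other hdk (Ne.symm hkj) (Ne.symm hkl), e5, e2, e3]
        have m1 : max (-(-ut)) 0 = ut := by rw [neg_neg, max_eq_left hut.le]
        have m2 : max (-((q m).1)) 0 = 0 := by rw [max_eq_right]; linarith
        rw [m1, m2]
        ring
      have f6 : N1 l j = (q (m+1)).2.2.2 := by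
        rw [q4 m, hN1eq, mutB_other hdk (Ne.symm hkl) (Ne.symm hkj), e6, e4, e1]
        have m1 : max (-((q m).2.1)) 0 = 0 := by rw [max_eq_right]; linarith
        have m2 : max u 0 = u := max_eq_left hu.le
        rw [m1, m2]
        ring
      have hredm1 := (hred (2*m+1)).1
      have cycm1 := hB _ hredm1
      have hN1pos : 0 < N1 j k := by rw [f2]; exact hut
      obtain ⟨d1,d2,d3,d4,d5⟩ := cyc_of_pos (Ne.symm hkj) hjl hkl cycm1 hN1pos
      rw [← hN1] at d1 d2 d3 d4 d5
      have hw1' : 0 < (q (m+1)).2.2.1 := by rw [f5] at d2; linarith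
      have hwt' : 0 < (q (m+1)).2.2.2 := by rw [f6] at d3; linarith
      have hdj : N1 j j = 0 := diag_zero cycm1 j
      have hw22 : w ++ altW k j (2*(m+1)) = (w ++ altW k j (2*m+1)) ++ [j] := by
        have h0 : 2*(m+1) = 2*m+2 := by ring
        rw [h0, halt_odd m, ← List.append_assoc]
      have hN2eq : Bmat B0 (w ++ altW k j (2*(m+1))) = mutB j N1 := by
        rw [hw22, Bmat_concat, hN1]
      refine ⟨?_, ?_, ?_, ?_, ?_, ?_⟩
      · rw [hN2eq, mutB_col_k hdj hkj, f1]; ring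
      · rw [hN2eq, mutB_row_k hdj hkj, f2]
      · rw [q1 m, hN2eq, mutB_other hdj hkj (Ne.symm hjl), f3, f1, f5, q3 m]
        have m1 : max (-(-u)) 0 = u := by rw [neg_neg, max_eq_left hu.le]
        have m2 : max (-(ut * (q m).1 - (q m).2.2.1)) 0 = 0 := by
          rw [max_eq_right]
          rw [q3 m] at hw1'
          linarith
        rw [m1, m2]
        ring
      · rw [q2 m, hN2eq, mutB_other hdj (Ne.symm hjl) hkj, f4, f6, f2, q4 m]
        have m1 : max (-(u * (q m).2.1 - (q m).2.2.2)) 0 = 0 := by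
          rw [max_eq_right]
          rw [q4 m] at hwt'
          linarith
        have m2 : max ut 0 = ut := max_eq_left hut.le
        rw [m1, m2]
        ring
      · rw [hN2eq, mutB_row_k hdj (Ne.symm hjl), f5]; ring
      · rw [hN2eq, mutB_col_k hdj (Ne.symm hjl), f6]
  -- positivity of the w-sequence and the linear recurrence give a contradiction
  have hy : ∀ n, 0 < (q n).2.2.1 := by
    intro n
    obtain ⟨e1,_,_,_,e5,_⟩ := shape n
    have cycn := hB _ (hred (2*n)).1
    have hNpos : 0 < Bmat B0 (w ++ altW k j (2*n)) k j := by rw [e1]; exact hu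
    obtain ⟨_,_,_,c4,_⟩ := cyc_of_pos hkj hkl hjl cycn hNpos
    rw [e5] at c4
    exact c4
  refine no_pos_seq (a := u * ut - 2) (by linarith) (fun n => (q n).2.2.1) hy ?_
  intro n
  show (q (n+1+1)).2.2.1 = (u * ut - 2) * (q (n+1)).2.2.1 - (q n).2.2.1
  rw [q3 (n+1), q3 n, q1 n]
  ring

end SC
namespace SC

lemma max_zero_half (x : ℝ) : max x 0 = (x + |x|)/2 := by
  rcases le_total 0 x with h|h
  · rw [max_eq_left h, abs_of_nonneg h]; ring
  · rw [max_eq_right h, abs_of_nonpos h]; ring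

lemma maxswap (c d : ℝ) : max (-c) 0 * d + c * max d 0 = max (-d) 0 * c + d * max c 0 := by
  rw [max_zero_half, max_zero_half, max_zero_half, max_zero_half, abs_neg, abs_neg]
  ring

lemma mutB_kk {B : Mat3} {k : Fin 3} (hd : B k k = 0) : mutB k B k k = 0 := by
  rw [mutB_apply hd]
  simp [hd]

lemma mutB_transpose {B : Mat3} {k : Fin 3} (hd : ∀ x, B x x = 0) :
    mutB k Bᵀ = (mutB k B)ᵀ := by
  have hdT : Bᵀ k k = 0 := hd k
  ext x y
  rw [Matrix.transpose_apply]
  by_cases hx : x = k <;> by_cases hy : y = k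
  · subst hx; subst hy
    rw [mutB_kk hdT, mutB_kk (hd _)]
  · subst hx
    rw [mutB_row_k hdT hy, mutB_col_k (hd _) hy, Matrix.transpose_apply]
  · subst hy
    rw [mutB_col_k hdT hx, mutB_row_k (hd _) hx, Matrix.transpose_apply]
  · rw [mutB_other hdT hx hy, mutB_other (hd _) hy hx]
    rw [Matrix.transpose_apply, Matrix.transpose_apply, Matrix.transpose_apply]
    have := maxswap (B k x) (B y k)
    linarith

lemma cycPat_anti (i j : Fin 3) : cyclicPattern j i = -cyclicPattern i j := by
  fin_cases i <;> fin_cases j <;> norm_num [cyclicPattern]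

lemma IsCyclic3_transpose {M : Mat3} (h : IsCyclic3 M) : IsCyclic3 Mᵀ := by
  rcases h with h|h
  · right
    intro i j
    rw [Matrix.transpose_apply, h j i]
    exact cycPat_anti i j
  · left
    intro i j
    rw [Matrix.transpose_apply, h j i, cycPat_anti i j, neg_neg]

lemma diag_zero_all {B0 : Mat3} (hB : ClusterCyclic B0) {w : List (Fin 3)}
    (hw : ReducedSeq w) (x : Fin 3) : Bmat B0 w x x = 0 :=
  diag_zero (hB w hw) x

lemma Bmat_transpose {B0 : Mat3} (hB : ClusterCyclic B0) :
    ∀ w : List (Fin 3), ReducedSeq w → Bmat B0ᵀ w = (Bmat B0 w)ᵀ := by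
  intro w
  induction w using List.reverseRecOn with
  | nil => intro _; rfl
  | append_singleton w k ih =>
    intro hw
    have hw' : ReducedSeq w := (reduced_concat.1 hw).1
    rw [Bmat_concat, Bmat_concat, ih hw', mutB_transpose (fun x => diag_zero_all hB hw' x)]

lemma ClusterCyclic_transpose {B0 : Mat3} (hB : ClusterCyclic B0) : ClusterCyclic B0ᵀ := by
  intro w hw
  rw [Bmat_transpose hB w hw]
  exact IsCyclic3_transpose (hB w hw)

lemma pair_prod_neg {M : Mat3} {k j : Fin 3} (hkj : k ≠ j) (h : IsCyclic3 M) :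
    M k j * M j k < 0 := by
  obtain ⟨l, hkl, hjl⟩ := third k j hkj
  have h0 : M k j ≠ 0 := by
    intro h0
    have := row_prod_neg hkj hkl hjl h
    rw [h0] at this
    simp at this
  rcases lt_or_gt_of_ne h0 with hn|hp
  · have h2 : 0 < M k l := by nlinarith [row_prod_neg hkj hkl hjl h]
    have := (cyc_of_pos hkl hkj (Ne.symm hjl) h h2).2.2.2.1
    -- 0 < M l j ... need M j k sign: cyc_of_pos (k,l,j) gives: M l k < 0, M k j < 0, 0 < M j k, 0 < M l j, M j l < 0
    obtain ⟨_, _, _, _, _⟩ := cyc_of_pos hkl hkj (Ne.symm hjl) h h2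
    nlinarith [(cyc_of_pos hkl hkj (Ne.symm hjl) h h2).2.2.1]
  · have := (cyc_of_pos hkj hkl hjl h hp).1
    nlinarith

/-- Opposite products of cluster-cyclic matrices are ≤ -4. -/
lemma pair_ge4 {B0 : Mat3} (hB : ClusterCyclic B0) {w : List (Fin 3)} (hw : ReducedSeq w)
    {k j : Fin 3} (hkj : k ≠ j) : Bmat B0 w k j * Bmat B0 w j k ≤ -4 := by
  obtain ⟨l, hkl, hjl⟩ := third k j hkj
  have hprod := pair_prod_neg hkj (hB w hw)
  by_cases hlk : w.getLast? = some k
  · have hlastj : w.getLast? ≠ some j := by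
      rw [hlk]
      simp [hkj]
    rcases lt_or_gt_of_ne (fun h0 : Bmat B0 w j k = 0 => by rw [h0] at hprod; simp at hprod) with hn|hp
    · -- B w j k < 0, so B w k j > 0; use transpose at (j,k)
      have hp' : 0 < (Bmat B0ᵀ w) j k := by
        rw [Bmat_transpose hB w hw, Matrix.transpose_apply]
        nlinarith
      have := descent_core (ClusterCyclic_transpose hB) hw (Ne.symm hkj) hjl hkl hlastj hp'
      rw [Bmat_transpose hB w hw, Matrix.transpose_apply, Matrix.transpose_apply] at this
      linarith [this, mul_comm (Bmat B0 w k j) (Bmat B0 w j k)]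
    · have := descent_core hB hw (Ne.symm hkj) hjl hkl hlastj hp
      linarith [this, mul_comm (Bmat B0 w k j) (Bmat B0 w j k)]
  · rcases lt_or_gt_of_ne (fun h0 : Bmat B0 w k j = 0 => by rw [h0] at hprod; simp at hprod) with hn|hp
    · have hp' : 0 < (Bmat B0ᵀ w) k j := by
        rw [Bmat_transpose hB w hw, Matrix.transpose_apply]
        nlinarith
      have := descent_core (ClusterCyclic_transpose hB) hw hkj hkl hjl hlk hp'
      rw [Bmat_transpose hB w hw, Matrix.transpose_apply, Matrix.transpose_apply] at this
      linarith [this, mul_comm (Bmat B0 w k j) (Bmat B0 w j k)]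
    · have := descent_core hB hw hkj hkl hjl hlk hp
      linarith [this, mul_comm (Bmat B0 w k j) (Bmat B0 w j k)]

end SC
namespace SC

def INVp (B0 : Mat3) (w : List (Fin 3)) : Prop :=
  ∃ ε : Fin 3 → ℝ, (∀ i, ε i = 1 ∨ ε i = -1) ∧ (∀ i r, 0 ≤ ε i * Cmat B0 w r i) ∧
    (∀ m x, w.getLast? ≠ some m → m ≠ x → 0 < ε m * Bmat B0 w m x → ε x = -ε m →
      ∀ r, 0 ≤ ε m * (Cmat B0 w r x + (ε m * Bmat B0 w m x / 2) * Cmat B0 w r m))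

lemma flip_ineq1 {u ut cj ck : ℝ} (hu : 0 < u) (hut : 0 < ut) (hP : 4 ≤ u * ut)
    (hcj : 0 ≤ cj) (hck : 0 ≤ ck) : 0 ≤ -ck + ut / 2 * (cj + u * ck) := by
  nlinarith [mul_nonneg hut.le hcj, mul_nonneg (by nlinarith : (0:ℝ) ≤ u * ut - 2) hck]

lemma flip_ineq2 {u ut cj ck : ℝ} (hu : 0 < u) (hut : 0 < ut) (hP : 4 ≤ u * ut)
    (hFr : 0 ≤ cj + u / 2 * ck) (hck : 0 ≤ ck) : 0 ≤ -ck + ut / 2 * (cj + u * ck) := by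
  nlinarith [mul_nonneg hut.le hFr, mul_nonneg (by nlinarith : (0:ℝ) ≤ u * ut - 4) hck]

lemma two_others (k : Fin 3) : ∃ a b : Fin 3, k ≠ a ∧ k ≠ b ∧ a ≠ b := by
  fin_cases k
  · exact ⟨1, 2, by decide, by decide, by decide⟩
  · exact ⟨0, 2, by decide, by decide, by decide⟩
  · exact ⟨0, 1, by decide, by decide, by decide⟩

lemma core_step {B0 : Mat3} (hB : ClusterCyclic B0) {w : List (Fin 3)} {k j l : Fin 3}
    (hw : ReducedSeq (w ++ [k])) (hkj : k ≠ j) (hkl : k ≠ l) (hjl : j ≠ l)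
    (ε : Fin 3 → ℝ) (hepm : ∀ i, ε i = 1 ∨ ε i = -1)
    (hcoh : ∀ i r, 0 ≤ ε i * Cmat B0 w r i)
    (hF : ∀ m x, w.getLast? ≠ some m → m ≠ x → 0 < ε m * Bmat B0 w m x → ε x = -ε m →
      ∀ r, 0 ≤ ε m * (Cmat B0 w r x + (ε m * Bmat B0 w m x / 2) * Cmat B0 w r m))
    (hj : 0 < ε k * Bmat B0 w k j) :
    INVp B0 (w ++ [k]) := by
  obtain ⟨hwred, hlast⟩ := reduced_concat.1 hw
  have cycB := hB w hwred
  have cycB' := hB _ hw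
  have hBk : Bmat B0 w k k = 0 := diag_zero cycB k
  have he := hepm k
  have he2 : ε k * ε k = 1 := by rcases he with h|h <;> rw [h] <;> norm_num
  obtain ⟨o1, o2, o3, o4, o5⟩ := escaled_cyc hkj hkl hjl cycB he hj
  -- new C entries
  have hCk : ∀ r, Cmat B0 (w ++ [k]) r k = -(Cmat B0 w r k) := by
    intro r
    rw [Cmat_concat_apply]
    simp [hBk]
  have hmaxid : ∀ b : ℝ, max b 0 - b = max (-b) 0 := by
    intro b
    rcases le_total 0 b with h|h
    · rw [max_eq_left h, max_eq_right (by linarith : -b ≤ 0)]; ring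
    · rw [max_eq_right h, max_eq_left (by linarith : (0:ℝ) ≤ -b)]; ring
  have hCx : ∀ r x, x ≠ k → Cmat B0 (w ++ [k]) r x
      = Cmat B0 w r x + Cmat B0 w r k * max (ε k * Bmat B0 w k x) 0 := by
    intro r x hx
    rw [Cmat_concat_apply, if_neg hx]
    rcases he with h|h
    · have h0 : 0 ≤ Cmat B0 w r k := by have := hcoh k r; rw [h, one_mul] at this; exact this
      rw [h, one_mul, max_eq_right (by linarith : -(Cmat B0 w r k) ≤ 0)]
      ring
    · have h0 : Cmat B0 w r k ≤ 0 := by have := hcoh k r; rw [h] at this; linarith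
      rw [h, max_eq_left (by linarith : (0:ℝ) ≤ -(Cmat B0 w r k))]
      have hmx : max ((-1 : ℝ) * Bmat B0 w k x) 0 = max (-(Bmat B0 w k x)) 0 := by norm_num
      rw [hmx]
      linear_combination (Cmat B0 w r k) * hmaxid (Bmat B0 w k x)
  -- B' facts
  have hB'jk : Bmat B0 (w ++ [k]) j k = -(Bmat B0 w j k) := by
    rw [Bmat_concat]; exact mutB_col_k hBk (Ne.symm hkj)
  have hut : 0 < ε k * Bmat B0 (w ++ [k]) j k := by
    rw [hB'jk]
    have e : ε k * -(Bmat B0 w j k) = -(ε k * Bmat B0 w j k) := by ring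
    rw [e]; linarith
  have hP4 : 4 ≤ (ε k * Bmat B0 w k j) * (ε k * Bmat B0 (w ++ [k]) j k) := by
    have hp := pair_ge4 hB hwred hkj
    rw [hB'jk]
    have e : (ε k * Bmat B0 w k j) * (ε k * -(Bmat B0 w j k))
        = -((ε k * ε k) * (Bmat B0 w k j * Bmat B0 w j k)) := by ring
    rw [e, he2, one_mul]
    linarith
  obtain ⟨n1, n2, n3, n4, n5⟩ := escaled_cyc (Ne.symm hkj) hjl hkl cycB' he hut
  -- the new sign vector
  set E : Fin 3 → ℝ := Function.update (Function.update ε j (ε k)) k (-(ε k)) with hEdef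
  have E1 : E k = -(ε k) := by rw [hEdef]; exact Function.update_self _ _ _
  have E2 : E j = ε k := by
    rw [hEdef, Function.update_of_ne (Ne.symm hkj)]
    exact Function.update_self _ _ _
  have E3 : E l = ε l := by
    rw [hEdef, Function.update_of_ne (Ne.symm hkl), Function.update_of_ne (Ne.symm hjl)]
  refine ⟨E, ?_, ?_, ?_⟩
  · intro i
    rcases mem3 hkj hkl hjl i with hik|hij|hil
    · rw [hik, E1]
      rcases he with h|h
      · right; rw [h]
      · left; rw [h]; norm_num
    · rw [hij, E2]; exact he
    · rw [hil, E3]; exact hepm l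
  · intro i r
    rcases mem3 hkj hkl hjl i with hik|hij|hil
    · rw [hik, E1, hCk r]
      have e : -(ε k) * -(Cmat B0 w r k) = ε k * Cmat B0 w r k := by ring
      rw [e]; exact hcoh k r
    · rw [hij, E2, hCx r j (Ne.symm hkj), max_eq_left hj.le]
      have e : ε k * (Cmat B0 w r j + Cmat B0 w r k * (ε k * Bmat B0 w k j))
          = ε k * Cmat B0 w r j + (ε k * Bmat B0 w k j) * (ε k * Cmat B0 w r k) := by ring
      rw [e]
      have hej : ε j = ε k ∨ ε j = -(ε k) := by
        rcases hepm j with h|h <;> rcases he with h'|h' <;> rw [h, h'] <;> norm_num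
      rcases hej with hej|hej
      · have h1 : 0 ≤ ε k * Cmat B0 w r j := by rw [← hej]; exact hcoh j r
        have h2 := mul_nonneg hj.le (hcoh k r)
        linarith
      · have hFr := hF k j hlast hkj hj hej r
        have eF : ε k * (Cmat B0 w r j + ε k * Bmat B0 w k j / 2 * Cmat B0 w r k)
            = ε k * Cmat B0 w r j + (ε k * Bmat B0 w k j) / 2 * (ε k * Cmat B0 w r k) := by ring
        rw [eF] at hFr
        have h2 := mul_nonneg hj.le (hcoh k r)
        linarith
    · rw [hil, E3, hCx r l (Ne.symm hkl), max_eq_right o2.le, mul_zero, add_zero]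
      exact hcoh l r
  · intro m x hm hmx h1 h2
    have hmk : m ≠ k := by
      intro h; subst h
      exact hm (List.getLast?_concat (l := w))
    rcases mem3 hkj hkl hjl m with hmk'|hmj|hml
    · exact absurd hmk' hmk
    · -- m = j
      rw [hmj] at h1 h2 hmx ⊢
      rw [E2] at h1 h2 ⊢
      rcases mem3 hkj hkl hjl x with hxk|hxj|hxl
      · -- x = k : the real case
        rw [hxk]
        intro r
        rw [hCk r, hCx r j (Ne.symm hkj), max_eq_left hj.le]
        have e : ε k * (-(Cmat B0 w r k) + ε k * Bmat B0 (w ++ [k]) j k / 2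
              * (Cmat B0 w r j + Cmat B0 w r k * (ε k * Bmat B0 w k j)))
            = -(ε k * Cmat B0 w r k) + (ε k * Bmat B0 (w ++ [k]) j k) / 2
              * (ε k * Cmat B0 w r j + (ε k * Bmat B0 w k j) * (ε k * Cmat B0 w r k)) := by
          ring
        rw [e]
        have hej : ε j = ε k ∨ ε j = -(ε k) := by
          rcases hepm j with h|h <;> rcases he with h'|h' <;> rw [h, h'] <;> norm_num
        rcases hej with hej|hej
        · have hcj : 0 ≤ ε k * Cmat B0 w r j := by rw [← hej]; exact hcoh j r
          exact flip_ineq1 hj hut hP4 hcj (hcoh k r)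
        · have hFr := hF k j hlast hkj hj hej r
          have eF : ε k * (Cmat B0 w r j + ε k * Bmat B0 w k j / 2 * Cmat B0 w r k)
              = ε k * Cmat B0 w r j + (ε k * Bmat B0 w k j) / 2 * (ε k * Cmat B0 w r k) := by
            ring
          rw [eF] at hFr
          exact flip_ineq2 hj hut hP4 hFr (hcoh k r)
      · exact absurd hxj.symm hmx
      · -- x = l : vacuous
        exfalso
        rw [hxl] at h1
        linarith
    · -- m = l
      rw [hml] at h1 h2 hmx ⊢
      rw [E3] at h1 h2 ⊢
      rcases mem3 hkj hkl hjl x with hxk|hxj|hxl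
      · -- x = k : vacuous
        exfalso
        rw [hxk, E1] at h2
        have hlk : ε l = ε k := by linarith
        rw [hxk, hlk] at h1
        linarith
      · -- x = j : vacuous
        exfalso
        rw [hxj, E2] at h2
        have hlk : ε l = -(ε k) := by linarith
        rw [hxj, hlk] at h1
        have e : -(ε k) * Bmat B0 (w ++ [k]) l j = -(ε k * Bmat B0 (w ++ [k]) l j) := by ring
        rw [e] at h1
        linarith
      · exact absurd hxl.symm hmx

lemma INVp_main {B0 : Mat3} (hB : ClusterCyclic B0) :
    ∀ w : List (Fin 3), ReducedSeq w → INVp B0 w := by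
  intro w
  induction w using List.reverseRecOn with
  | nil =>
    intro _
    refine ⟨fun _ => 1, fun i => Or.inl rfl, ?_, ?_⟩
    · intro i r
      rw [Cmat_nil, one_mul]
      by_cases h : r = i <;> simp [Matrix.one_apply, h]
    · intro m x _ _ _ h4
      norm_num at h4
  | append_singleton w k ih =>
    intro hw
    obtain ⟨hwred, _⟩ := reduced_concat.1 hw
    obtain ⟨ε, hepm, hcoh, hF⟩ := ih hwred
    obtain ⟨a, b, hka, hkb, hab⟩ := two_others k
    have he2 : ε k * ε k = 1 := by rcases hepm k with h|h <;> rw [h] <;> norm_num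
    have hprod : (ε k * Bmat B0 w k a) * (ε k * Bmat B0 w k b) < 0 := by
      have h := row_prod_neg hka hkb hab (hB w hwred)
      have e : (ε k * Bmat B0 w k a) * (ε k * Bmat B0 w k b)
          = Bmat B0 w k a * Bmat B0 w k b := by
        linear_combination (Bmat B0 w k a * Bmat B0 w k b) * he2
      rw [e]; exact h
    rcases mul_neg_iff.1 hprod with ⟨hpos, _⟩|⟨_, hpos⟩
    · exact core_step hB hw hka hkb hab ε hepm hcoh hF hpos
    · exact core_step hB hw hkb hka (Ne.symm hab) ε hepm hcoh hF hpos

end SC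

theorem sign_coherence_cluster_cyclic (B : Mat3) (hB : ClusterCyclic B)
    (w : List (Fin 3)) (hw : ReducedSeq w) (i : Fin 3) :
    (∀ j, 0 ≤ Cmat B w j i) ∨ (∀ j, Cmat B w j i ≤ 0) := by
  obtain ⟨ε, hepm, hcoh, _⟩ := SC.INVp_main hB w hw
  rcases hepm i with h|h
  · left
    intro j
    have := hcoh i j
    rw [h, one_mul] at this
    exact this
  · right
    intro j
    have := hcoh i j
    rw [h] at this
    linarith
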